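/- arXiv:2405.02833 — 4 statements merged into one kernel-verified Lean document; each statement's English description precedes it below -/
import Mathlib

section
/- Let F be a continuous distribution function on ℝ with F ∈ MDA(H) for a GEV distribution function H, with normalizing sequences (c*_n), c*_n > 0, and (d*_n). For each n ∈ ℕ let δ_n be an n-variate copula diagonal, and let r : ℕ → (0,∞) be a rate function with r_n → ∞ as n → ∞ such that the diagonal power distortions D_n^r(u) = δ_n(u^{1/r_n}) converge pointwise on [0,1] to a continuous function D. Then for every x ∈ ℝ, δ_n(F(c*_{⌈r_n⌉} x + d*_{⌈r_n⌉})) → D(H(x)) as n → ∞ (i.e., the maxima M_n satisfy P((M_n − d*_{⌈r_n⌉})/c*_{⌈r_n⌉} ≤ x) → D(H(x))), and moreover D is a continuous distribution function on [0,1], i.e., D is nondecreasing with D(0) = 0 and D(1) = 1. (Theorem 2.x(i), generalized Fisher–Tippett–Gnedenko convergence.) -/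
open Filter Set Topology

/-- The generalized extreme value (GEV) distribution function `H_{ξ,μ,σ}`. -/
noncomputable def GEVcdf (ξ μ σ : ℝ) : ℝ → ℝ := fun x =>
  if ξ = 0 then Real.exp (-Real.exp (-(x - μ) / σ))
  else if 0 < 1 + ξ * (x - μ) / σ then Real.exp (-(1 + ξ * (x - μ) / σ) ^ (-1 / ξ))
  else if 0 < ξ then 0 else 1

/-- A distribution function is GEV if it equals some `H_{ξ,μ,σ}` with `σ > 0`. -/
def IsGEV (H : ℝ → ℝ) : Prop := ∃ ξ μ σ : ℝ, 0 < σ ∧ H = GEVcdf ξ μ σ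

/-- A distribution function on `ℝ`: nondecreasing, right-continuous, with limits 0 at `-∞`
and 1 at `∞`, taking values in `[0,1]`. -/
def IsDistFun (F : ℝ → ℝ) : Prop :=
  Monotone F ∧ (∀ x, ContinuousWithinAt F (Ici x) x) ∧
    Tendsto F atBot (nhds 0) ∧ Tendsto F atTop (nhds 1) ∧ ∀ x, F x ∈ Icc (0:ℝ) 1

/-- The properties of the diagonal `u ↦ C_n(u,…,u)` of an `n`-dimensional copula. -/
def IsCopulaDiagonal (n : ℕ) (δ : ℝ → ℝ) : Prop :=
  δ 0 = 0 ∧ δ 1 = 1 ∧ MonotoneOn δ (Icc 0 1) ∧ (∀ u ∈ Icc (0:ℝ) 1, δ u ≤ u) ∧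
    ∀ u ∈ Icc (0:ℝ) 1, ∀ v ∈ Icc (0:ℝ) 1, |δ u - δ v| ≤ (n : ℝ) * |u - v|

/-- A distribution function on `[0,1]`: nondecreasing, right-continuous, `D(0)=0`, `D(1)=1`,
with values in `[0,1]`. -/
def IsDistFun01 (D : ℝ → ℝ) : Prop :=
  D 0 = 0 ∧ D 1 = 1 ∧ MonotoneOn D (Icc 0 1) ∧
    (∀ u ∈ Ico (0:ℝ) 1, ContinuousWithinAt D (Icc u 1) u) ∧
    ∀ u ∈ Icc (0:ℝ) 1, D u ∈ Icc (0:ℝ) 1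

/-- A degenerate distribution function `x ↦ 1_{[a,∞)}(x)`. -/
noncomputable def IsDegenerateDF (G : ℝ → ℝ) : Prop :=
  ∃ a : ℝ, ∀ x, G x = if a ≤ x then 1 else 0

/-- An Archimedean generator: continuous on `[0,∞)`, `ψ(0)=1`, values in `[0,1]`,
`ψ(t) → 0` as `t → ∞`, strictly decreasing on `[0, inf{x : ψ(x)=0}]` (equivalently,
strictly decreasing as long as it is positive). -/
def IsArchimedeanGenerator (ψ : ℝ → ℝ) : Prop :=
  ContinuousOn ψ (Ici 0) ∧ ψ 0 = 1 ∧ (∀ t ∈ Ici (0:ℝ), ψ t ∈ Icc (0:ℝ) 1) ∧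
    Tendsto ψ atTop (nhds 0) ∧
    ∀ s t : ℝ, 0 ≤ s → s < t → 0 < ψ s → ψ t < ψ s


lemma rpow_mem_Icc {b : ℝ} (hb : b ∈ Icc (0:ℝ) 1) (t : ℝ) (ht : 0 ≤ t) :
    b ^ t ∈ Icc (0:ℝ) 1 :=
  ⟨Real.rpow_nonneg hb.1 t, Real.rpow_le_one hb.1 hb.2 ht⟩

lemma key_lemma (D : ℝ → ℝ) (δ : ℕ → ℝ → ℝ) (r : ℕ → ℝ) (u : ℕ → ℝ) (h : ℝ)
    (hδ : ∀ n, IsCopulaDiagonal n (δ n)) (hr : ∀ n, 0 < r n)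
    (hrtop : Tendsto r atTop atTop)
    (hDcont : ContinuousOn D (Icc 0 1))
    (hconv : ∀ v ∈ Icc (0:ℝ) 1, Tendsto (fun n => δ n (v ^ (1 / r n))) atTop (nhds (D v)))
    (hu : ∀ n, u n ∈ Icc (0:ℝ) 1)
    (hh : h ∈ Icc (0:ℝ) 1)
    (hlim : Tendsto (fun n => u n ^ (Nat.ceil (r n))) atTop (nhds h)) :
    Tendsto (fun n => δ n (u n)) atTop (nhds (D h)) := by
  have hrne : ∀ n, 1 / r n ≠ 0 := fun n => one_div_ne_zero (hr n).ne'
  have hD0 : D 0 = 0 := by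
    refine tendsto_nhds_unique (hconv 0 ⟨le_refl _, zero_le_one⟩) ?_
    refine (tendsto_const_nhds : Tendsto (fun _ : ℕ => (0:ℝ)) atTop (nhds 0)).congr fun n => ?_
    rw [Real.zero_rpow (hrne n), (hδ n).1]
  have hD1 : D 1 = 1 := by
    refine tendsto_nhds_unique (hconv 1 ⟨zero_le_one, le_refl _⟩) ?_
    refine (tendsto_const_nhds : Tendsto (fun _ : ℕ => (1:ℝ)) atTop (nhds 1)).congr fun n => ?_
    rw [Real.one_rpow, (hδ n).2.1]
  rw [Metric.tendsto_nhds]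
  intro ε hε
  obtain ⟨θ, hθ0, hθ⟩ := Metric.continuousWithinAt_iff.mp (hDcont h hh) (ε/2) (by positivity)
  -- Upper bound
  have hup : ∀ᶠ n in atTop, δ n (u n) < D h + ε := by
    rcases eq_or_lt_of_le hh.2 with h1 | h1
    · filter_upwards with n
      have h2 : δ n (u n) ≤ u n := (hδ n).2.2.2.1 (u n) (hu n)
      have : D h = 1 := by rw [h1, hD1]
      have := (hu n).2
      linarith
    · set b := min 1 (h + θ/2) with hbdef
      have hb_gt : h < b := lt_min h1 (by linarith)
      have hb_le1 : b ≤ 1 := min_le_left _ _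
      have hb_mem : b ∈ Icc (0:ℝ) 1 := ⟨le_trans hh.1 hb_gt.le, hb_le1⟩
      have hb_pos : 0 < b := lt_of_le_of_lt hh.1 hb_gt
      have hclose : dist b h < θ := by
        rw [Real.dist_eq, abs_of_nonneg (by linarith)]
        have : b ≤ h + θ/2 := min_le_right _ _
        linarith
      have hDb : D b < D h + ε/2 := by
        have := hθ hb_mem hclose
        rw [Real.dist_eq, abs_sub_lt_iff] at this
        linarith [this.1]
      set b' := (h + b)/2 with hb'def
      have hb'1 : h < b' := by rw [hb'def]; linarith
      have hb'2 : b' < b := by rw [hb'def]; linarith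
      have E1 : ∀ᶠ n in atTop, u n ^ (Nat.ceil (r n)) < b' := hlim.eventually (eventually_lt_nhds hb'1)
      have hbt : Tendsto (fun n => b * b ^ (1 / r n)) atTop (nhds b) := by
        have h1t : Tendsto (fun n => 1 / r n) atTop (nhds 0) := by
          simpa [one_div, Function.comp_def] using tendsto_inv_atTop_zero.comp hrtop
        have h2t : Tendsto (fun n => b ^ (1 / r n)) atTop (nhds 1) := by
          have hc : ContinuousAt (fun x : ℝ => b ^ x) 0 := Real.continuousAt_const_rpow hb_pos.ne' 
          simpa [Real.rpow_zero, Function.comp_def] using (hc.tendsto.comp h1t)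
        simpa using h2t.const_mul b
      have E2 : ∀ᶠ n in atTop, b' < b * b ^ (1 / r n) := hbt.eventually (eventually_gt_nhds hb'2)
      have E3 : ∀ᶠ n in atTop, dist (δ n (b ^ (1 / r n))) (D b) < ε/2 :=
        (Metric.tendsto_nhds.mp (hconv b hb_mem)) (ε/2) (by positivity)
      filter_upwards [E1, E2, E3] with n e1 e2 e3
      have hm0 : Nat.ceil (r n) ≠ 0 := (Nat.ceil_pos.2 (hr n)).ne'
      have hpow : (b ^ (1 / r n)) ^ (Nat.ceil (r n)) = b ^ ((Nat.ceil (r n) : ℝ) / r n) := by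
        rw [← Real.rpow_natCast (b ^ (1 / r n)) (Nat.ceil (r n)), ← Real.rpow_mul hb_pos.le]
        ring_nf
      have hexp : ((Nat.ceil (r n) : ℝ)) / r n ≤ 1 + 1 / r n := by
        rw [div_le_iff₀ (hr n)]
        have := Nat.ceil_lt_add_one (hr n).le
        have h3 : (1 + 1 / r n) * r n = r n + 1 := by field_simp [(hr n).ne']
        rw [h3]; linarith
      have hge : b ^ ((1:ℝ) + 1 / r n) ≤ b ^ ((Nat.ceil (r n) : ℝ) / r n) :=
        Real.rpow_le_rpow_of_exponent_ge hb_pos hb_le1 hexp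
      have heq : b ^ ((1:ℝ) + 1 / r n) = b * b ^ (1 / r n) := by
        rw [Real.rpow_add hb_pos, Real.rpow_one]
      have hlt : u n ^ (Nat.ceil (r n)) < (b ^ (1 / r n)) ^ (Nat.ceil (r n)) := by
        rw [hpow]
        calc u n ^ (Nat.ceil (r n)) < b' := e1
        _ < b * b ^ (1 / r n) := e2
        _ = b ^ ((1:ℝ) + 1 / r n) := heq.symm
        _ ≤ _ := hge
      have hun : u n < b ^ (1 / r n) :=
        lt_of_pow_lt_pow_left₀ _ (Real.rpow_nonneg hb_pos.le _) hlt
      have hmem : b ^ (1 / r n) ∈ Icc (0:ℝ) 1 := rpow_mem_Icc hb_mem _ (one_div_nonneg.mpr (hr n).le)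
      have hmono : δ n (u n) ≤ δ n (b ^ (1 / r n)) :=
        (hδ n).2.2.1 (hu n) hmem hun.le
      rw [Real.dist_eq, abs_sub_lt_iff] at e3
      linarith [e3.1]
  -- Lower bound
  have hlow : ∀ᶠ n in atTop, D h - ε < δ n (u n) := by
    rcases eq_or_lt_of_le hh.1 with h0 | h0
    · filter_upwards with n
      have hmono : δ n 0 ≤ δ n (u n) :=
        (hδ n).2.2.1 ⟨le_refl _, zero_le_one⟩ (hu n) (hu n).1
      have : D h = 0 := by rw [← h0, hD0]
      rw [(hδ n).1] at hmono
      linarith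
    · set a := max 0 (h - θ/2) with hadef
      have ha_lt : a < h := max_lt h0 (by linarith)
      have ha_mem : a ∈ Icc (0:ℝ) 1 := ⟨le_max_left _ _, le_trans ha_lt.le hh.2⟩
      have hclose : dist a h < θ := by
        rw [Real.dist_eq, abs_of_nonpos (by linarith)]
        have : h - θ/2 ≤ a := le_max_right _ _
        linarith
      have hDa : D h - ε/2 < D a := by
        have := hθ ha_mem hclose
        rw [Real.dist_eq, abs_sub_lt_iff] at this
        linarith [this.2]
      have E1 : ∀ᶠ n in atTop, a < u n ^ (Nat.ceil (r n)) := hlim.eventually (eventually_gt_nhds ha_lt)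
      have E3 : ∀ᶠ n in atTop, dist (δ n (a ^ (1 / r n))) (D a) < ε/2 :=
        (Metric.tendsto_nhds.mp (hconv a ha_mem)) (ε/2) (by positivity)
      filter_upwards [E1, E3] with n e1 e3
      have hale : a ^ (1 / r n) ≤ u n := by
        rcases eq_or_lt_of_le ha_mem.1 with ha0 | ha0
        · rw [← ha0, Real.zero_rpow (hrne n)]; exact (hu n).1
        · have hexp : (1:ℝ) ≤ (Nat.ceil (r n) : ℝ) / r n := by
            rw [le_div_iff₀ (hr n), one_mul]; exact Nat.le_ceil _
          have hpow : (a ^ (1 / r n)) ^ (Nat.ceil (r n)) = a ^ ((Nat.ceil (r n) : ℝ) / r n) := by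
            rw [← Real.rpow_natCast (a ^ (1 / r n)) (Nat.ceil (r n)), ← Real.rpow_mul ha_mem.1]
            ring_nf
          have hle : a ^ ((Nat.ceil (r n) : ℝ) / r n) ≤ a := by
            nth_rewrite 2 [← Real.rpow_one a]
            exact Real.rpow_le_rpow_of_exponent_ge ha0 ha_mem.2 hexp
          have hlt : (a ^ (1 / r n)) ^ (Nat.ceil (r n)) < u n ^ (Nat.ceil (r n)) := by
            rw [hpow]; exact lt_of_le_of_lt hle e1
          exact (lt_of_pow_lt_pow_left₀ _ (hu n).1 hlt).le
      have hmem : a ^ (1 / r n) ∈ Icc (0:ℝ) 1 := rpow_mem_Icc ha_mem _ (one_div_nonneg.mpr (hr n).le)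
      have hmono : δ n (a ^ (1 / r n)) ≤ δ n (u n) := (hδ n).2.2.1 hmem (hu n) hale
      rw [Real.dist_eq, abs_sub_lt_iff] at e3
      linarith [e3.2]
  filter_upwards [hup, hlow] with n h1 h2
  rw [Real.dist_eq, abs_sub_lt_iff]
  constructor <;> linarith

/-- Theorem 2.x(i): generalized Fisher–Tippett–Gnedenko convergence under dependence. -/
theorem maxima_dependent_convergence
    (F H D : ℝ → ℝ) (cs ds : ℕ → ℝ) (δ : ℕ → ℝ → ℝ) (r : ℕ → ℝ)
    (hF : IsDistFun F) (hFcont : Continuous F)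
    (hH : IsGEV H) (hcs : ∀ n, 0 < cs n)
    (hMDA : ∀ x, Tendsto (fun n => F (cs n * x + ds n) ^ n) atTop (nhds (H x)))
    (hδ : ∀ n, IsCopulaDiagonal n (δ n))
    (hr : ∀ n, 0 < r n) (hrtop : Tendsto r atTop atTop)
    (hDcont : ContinuousOn D (Icc 0 1))
    (hconv : ∀ u ∈ Icc (0:ℝ) 1,
      Tendsto (fun n => δ n (u ^ (1 / r n))) atTop (nhds (D u))) :
    (∀ x, Tendsto (fun n => δ n (F (cs (Nat.ceil (r n)) * x + ds (Nat.ceil (r n)))))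
        atTop (nhds (D (H x)))) ∧
      MonotoneOn D (Icc 0 1) ∧ D 0 = 0 ∧ D 1 = 1 := by
  have hm : Tendsto (fun n => Nat.ceil (r n)) atTop atTop := by
    rw [tendsto_atTop_atTop]
    intro b
    obtain ⟨N, hN⟩ := (tendsto_atTop.mp hrtop (b : ℝ)).exists_forall_of_atTop
    exact ⟨N, fun n hn => by
      have := hN n hn
      calc b = Nat.ceil ((b : ℝ)) := (Nat.ceil_natCast b).symm
      _ ≤ Nat.ceil (r n) := Nat.ceil_mono this⟩
  refine ⟨fun x => ?_, ?_, ?_, ?_⟩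
  · have hu : ∀ n, F (cs (Nat.ceil (r n)) * x + ds (Nat.ceil (r n))) ∈ Icc (0:ℝ) 1 :=
      fun n => hF.2.2.2.2 _
    have hh : H x ∈ Icc (0:ℝ) 1 := by
      refine isClosed_Icc.mem_of_tendsto (hMDA x) (Eventually.of_forall fun n => ?_)
      exact ⟨pow_nonneg (hF.2.2.2.2 _).1 _, pow_le_one₀ (hF.2.2.2.2 _).1 (hF.2.2.2.2 _).2⟩
    have hlim : Tendsto (fun n => F (cs (Nat.ceil (r n)) * x + ds (Nat.ceil (r n)))
        ^ (Nat.ceil (r n))) atTop (nhds (H x)) := (hMDA x).comp hm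
    exact key_lemma D δ r _ _ hδ hr hrtop hDcont hconv hu hh hlim
  · intro u hu v hv huv
    refine le_of_tendsto_of_tendsto' (hconv u hu) (hconv v hv) fun n => ?_
    exact (hδ n).2.2.1 (rpow_mem_Icc hu _ (one_div_nonneg.mpr (hr n).le))
      (rpow_mem_Icc hv _ (one_div_nonneg.mpr (hr n).le))
      (Real.rpow_le_rpow hu.1 huv (one_div_nonneg.mpr (hr n).le))
  · refine tendsto_nhds_unique (hconv 0 ⟨le_refl _, zero_le_one⟩) ?_
    refine (tendsto_const_nhds : Tendsto (fun _ : ℕ => (0:ℝ)) atTop (nhds 0)).congr fun n => ?_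
    rw [Real.zero_rpow (one_div_ne_zero (hr n).ne'), (hδ n).1]
  · refine tendsto_nhds_unique (hconv 1 ⟨zero_le_one, le_refl _⟩) ?_
    refine (tendsto_const_nhds : Tendsto (fun _ : ℕ => (1:ℝ)) atTop (nhds 1)).congr fun n => ?_
    rw [Real.one_rpow, (hδ n).2.1]
end

section
/- Let F be a continuous distribution function on ℝ with F ∈ MDA(H) for a GEV distribution function H, with normalizing sequences (c*_n), c*_n > 0, and (d*_n). For each n ∈ ℕ let δ_n be an n-variate copula diagonal. Suppose r : ℕ → (0,∞) satisfies 1/r_n = O(1/n) (i.e., there is κ > 0 with n/r_n ≤ κ for all large n), and suppose D is a distribution function on [0,1] such that for all continuity points x of D∘H, δ_n(F(c*_{⌈r_n⌉} x + d*_{⌈r_n⌉})) → D(H(x)) as n → ∞. Then the diagonal power distortion satisfies D_n^r(u) = δ_n(u^{1/r_n}) → D(u) as n → ∞ for u ∈ {0,1} and for all continuity points u ∈ (0,1) of D. (Theorem 2.x(ii).) -/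
open Filter Set Topology

lemma my_abs_exp_sub_exp {s t : ℝ} (hs : s ≤ 0) (ht : t ≤ 0) :
    |Real.exp s - Real.exp t| ≤ |s - t| := by
  wlog h : t ≤ s generalizing s t
  · rw [abs_sub_comm, abs_sub_comm s t]
    exact this ht hs (le_of_not_ge h)
  rw [abs_of_nonneg (sub_nonneg.2 (Real.exp_le_exp.2 h)), abs_of_nonneg (sub_nonneg.2 h)]
  have h1 : Real.exp t = Real.exp s * Real.exp (t - s) := by rw [← Real.exp_add]; ring_nf
  have h2 : t - s + 1 ≤ Real.exp (t - s) := Real.add_one_le_exp (t - s)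
  have h3 : Real.exp s ≤ 1 := Real.exp_le_one_iff.2 hs
  nlinarith [Real.exp_pos s, mul_le_mul_of_nonneg_left h2 (Real.exp_pos s).le,
    mul_nonneg (by linarith : (0:ℝ) ≤ 1 - Real.exp s) (by linarith : (0:ℝ) ≤ s - t)]

lemma GEVcdf_mem_Icc (ξ μ σ : ℝ) (x : ℝ) : GEVcdf ξ μ σ x ∈ Icc (0:ℝ) 1 := by
  unfold GEVcdf
  split_ifs with h1 h2 h3
  · exact ⟨(Real.exp_pos _).le, Real.exp_le_one_iff.2 (neg_nonpos.2 (Real.exp_pos _).le)⟩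
  · refine ⟨(Real.exp_pos _).le, Real.exp_le_one_iff.2 ?_⟩
    simpa using Real.rpow_nonneg h2.le _
  · simp
  · simp

lemma exists_GEV_preimage (ξ μ σ : ℝ) (hσ : 0 < σ) {u : ℝ} (hu0 : 0 < u) (hu1 : u < 1) :
    ∃ x, GEVcdf ξ μ σ x = u ∧ ContinuousAt (GEVcdf ξ μ σ) x := by
  have hlu : Real.log u < 0 := Real.log_neg hu0 hu1
  set t : ℝ := -Real.log u with htdef
  have ht : 0 < t := by simp only [htdef]; linarith
  by_cases hξ : ξ = 0
  · subst hξ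
    refine ⟨μ - σ * Real.log t, ?_, ?_⟩
    · have hstep : -(μ - σ * Real.log t - μ) / σ = Real.log t := by field_simp; ring
      simp only [GEVcdf, if_pos rfl, hstep, Real.exp_log ht]
      rw [show -t = Real.log u by simp [htdef], Real.exp_log hu0]
      simp
    · have heq : GEVcdf 0 μ σ = fun x => Real.exp (-Real.exp (-(x - μ) / σ)) := by
        funext y; simp [GEVcdf]
      rw [heq]
      fun_prop
  · set s : ℝ := t ^ (-ξ) with hsdef
    have hs : 0 < s := Real.rpow_pos_of_pos ht _
    set x : ℝ := μ + σ * (s - 1) / ξ with hxdef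
    have hx1 : 1 + ξ * (x - μ) / σ = s := by
      rw [hxdef]; field_simp; ring
    have hpow : s ^ (-1 / ξ) = t := by
      rw [hsdef, ← Real.rpow_mul ht.le, show -ξ * (-1 / ξ) = 1 by field_simp, Real.rpow_one]
    refine ⟨x, ?_, ?_⟩
    · simp only [GEVcdf, if_neg hξ, hx1, if_pos hs, hpow]
      rw [show -t = Real.log u by simp [htdef], Real.exp_log hu0]
    · have hopen : {y : ℝ | 0 < 1 + ξ * (y - μ) / σ} ∈ nhds x := by
        apply (isOpen_lt continuous_const (by fun_prop)).mem_nhds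
        simpa [Set.mem_setOf_eq, hx1] using hs
      have heq : (fun y => Real.exp (-(1 + ξ * (y - μ) / σ) ^ (-1 / ξ)))
          =ᶠ[nhds x] GEVcdf ξ μ σ := by
        filter_upwards [hopen] with y hy
        simp only [GEVcdf, if_neg hξ, if_pos hy]
      refine ContinuousAt.congr ?_ heq
      have h1 : ContinuousAt (fun y : ℝ => 1 + ξ * (y - μ) / σ) x := by fun_prop
      exact ((h1.rpow_const (Or.inl (by rw [hx1]; exact hs.ne'))).neg).rexp

/-- Theorem 2.x(ii): necessity of the convergence of the diagonal power distortion. -/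
theorem diagonal_power_distortion_convergence_necessity
    (F H D : ℝ → ℝ) (cs ds : ℕ → ℝ) (δ : ℕ → ℝ → ℝ) (r : ℕ → ℝ)
    (hF : IsDistFun F) (hFcont : Continuous F)
    (hH : IsGEV H) (hcs : ∀ n, 0 < cs n)
    (hMDA : ∀ x, Tendsto (fun n => F (cs n * x + ds n) ^ n) atTop (nhds (H x)))
    (hδ : ∀ n, IsCopulaDiagonal n (δ n))
    (hr : ∀ n, 0 < r n)
    (hrO : ∃ κ : ℝ, 0 < κ ∧ ∀ᶠ n : ℕ in atTop, (n : ℝ) / r n ≤ κ)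
    (hD : IsDistFun01 D)
    (hconv : ∀ x, ContinuousAt (fun y => D (H y)) x →
      Tendsto (fun n => δ n (F (cs (Nat.ceil (r n)) * x + ds (Nat.ceil (r n)))))
        atTop (nhds (D (H x)))) :
    (∀ u ∈ ({0, 1} : Set ℝ),
      Tendsto (fun n => δ n (u ^ (1 / r n))) atTop (nhds (D u))) ∧
    (∀ u ∈ Ioo (0:ℝ) 1, ContinuousWithinAt D (Icc 0 1) u →
      Tendsto (fun n => δ n (u ^ (1 / r n))) atTop (nhds (D u))) := by
  obtain ⟨ξ, μ, σ, hσ, hHdef⟩ := hH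
  subst hHdef
  obtain ⟨κ, hκ, hκn⟩ := hrO
  constructor
  · rintro u (rfl | rfl)
    · have h0 : (fun n => δ n ((0:ℝ) ^ (1 / r n))) = fun _ => (0:ℝ) := by
        funext n
        rw [Real.zero_rpow (by have := hr n; positivity : (1 / r n) ≠ 0)]
        exact (hδ n).1
      rw [h0, hD.1]; exact tendsto_const_nhds
    · have h0 : (fun n => δ n ((1:ℝ) ^ (1 / r n))) = fun _ => (1:ℝ) := by
        funext n
        rw [Real.one_rpow]
        exact (hδ n).2.1
      rw [h0, hD.2.1]; exact tendsto_const_nhds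
  · rintro u ⟨hu0, hu1⟩ hDu
    obtain ⟨x, hHx, hHcont⟩ := exists_GEV_preimage ξ μ σ hσ hu0 hu1
    have hDH : ContinuousAt (fun y => D (GEVcdf ξ μ σ y)) x := by
      have hT : Tendsto (GEVcdf ξ μ σ) (nhds x) (nhdsWithin u (Icc (0:ℝ) 1)) := by
        rw [tendsto_nhdsWithin_iff]
        constructor
        · rw [← hHx]; exact hHcont.tendsto
        · exact Eventually.of_forall fun y => GEVcdf_mem_Icc ξ μ σ y
      have hcomp := Filter.Tendsto.comp (hDu : Tendsto D (nhdsWithin u (Icc (0:ℝ) 1)) (nhds (D u))) hT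
      simpa [ContinuousAt, hHx, Function.comp_def] using hcomp
    have L := hconv x hDH
    rw [hHx] at L
    have hrT : Tendsto r atTop atTop := by
      apply tendsto_atTop_mono' atTop (f₁ := fun n : ℕ => (n:ℝ) / κ)
      · filter_upwards [hκn] with n hn
        rw [div_le_iff₀ hκ]
        rw [div_le_iff₀ (hr n)] at hn
        nlinarith
      · exact tendsto_natCast_atTop_atTop.atTop_div_const hκ
    have hmT : Tendsto (fun n => Nat.ceil (r n)) atTop atTop :=
      tendsto_nat_ceil_atTop.comp hrT
    have hb : Tendsto (fun n => F (cs (Nat.ceil (r n)) * x + ds (Nat.ceil (r n)))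
        ^ (Nat.ceil (r n))) atTop (nhds u) := by
      have hcomp := (hMDA x).comp hmT
      rw [hHx] at hcomp
      exact hcomp
    have hlogb : Tendsto (fun n => Real.log (F (cs (Nat.ceil (r n)) * x + ds (Nat.ceil (r n)))
        ^ (Nat.ceil (r n)))) atTop (nhds (Real.log u)) :=
      ((Real.continuousAt_log hu0.ne').tendsto).comp hb
    have hg : Tendsto (fun n => |Real.log u| * κ / (Nat.ceil (r n) : ℝ) +
        κ * |Real.log u - Real.log (F (cs (Nat.ceil (r n)) * x + ds (Nat.ceil (r n)))
          ^ (Nat.ceil (r n)))|) atTop (nhds 0) := by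
      have h1 : Tendsto (fun n => |Real.log u| * κ / (Nat.ceil (r n) : ℝ)) atTop (nhds 0) :=
        Tendsto.div_atTop tendsto_const_nhds (tendsto_natCast_atTop_atTop.comp hmT)
      have h2 : Tendsto (fun n => κ * |Real.log u -
          Real.log (F (cs (Nat.ceil (r n)) * x + ds (Nat.ceil (r n))) ^ (Nat.ceil (r n)))|)
          atTop (nhds 0) := by
        have h3 : Tendsto (fun n => Real.log u -
            Real.log (F (cs (Nat.ceil (r n)) * x + ds (Nat.ceil (r n))) ^ (Nat.ceil (r n))))
            atTop (nhds 0) := by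
          simpa only [sub_self] using ((tendsto_const_nhds (x := Real.log u)).sub hlogb)
        simpa only [abs_zero, mul_zero] using (h3.abs.const_mul κ)
      simpa only [add_zero] using h1.add h2
    have hev : ∀ᶠ n in atTop, |δ n (u ^ (1 / r n)) -
        δ n (F (cs (Nat.ceil (r n)) * x + ds (Nat.ceil (r n))))| ≤
        |Real.log u| * κ / (Nat.ceil (r n) : ℝ) +
        κ * |Real.log u - Real.log (F (cs (Nat.ceil (r n)) * x + ds (Nat.ceil (r n)))
          ^ (Nat.ceil (r n)))| := by
      have hbhalf : ∀ᶠ n in atTop, u / 2 ≤ F (cs (Nat.ceil (r n)) * x + ds (Nat.ceil (r n)))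
          ^ (Nat.ceil (r n)) := hb.eventually (eventually_ge_nhds (by linarith))
      filter_upwards [hκn, hbhalf] with n hn1 hn2
      set A : ℝ := F (cs (Nat.ceil (r n)) * x + ds (Nat.ceil (r n))) with hAdef
      set M : ℕ := Nat.ceil (r n) with hMdef
      have hrn : 0 < r n := hr n
      have hm0 : M ≠ 0 := by
        rw [hMdef]; exact (Nat.ceil_pos.2 hrn).ne'
      have hmge : r n ≤ (M : ℝ) := Nat.le_ceil _
      have hmle : (M : ℝ) ≤ r n + 1 := (Nat.ceil_lt_add_one hrn.le).le
      have hmpos : (0:ℝ) < M := lt_of_lt_of_le hrn hmge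
      have ha01 : A ∈ Icc (0:ℝ) 1 := by rw [hAdef]; exact hF.2.2.2.2 _
      have hbn : 0 < A ^ M := lt_of_lt_of_le (by positivity) hn2
      have hbn1 : A ^ M ≤ 1 := pow_le_one₀ ha01.1 ha01.2
      have hArep : A = Real.exp (Real.log (A ^ M) * ((M : ℝ))⁻¹) := by
        have h := Real.pow_rpow_inv_natCast (x := A) ha01.1 hm0
        rw [Real.rpow_def_of_pos hbn] at h
        exact h.symm
      have hU : u ^ (1 / r n) = Real.exp (Real.log u * (1 / r n)) :=
        Real.rpow_def_of_pos hu0 _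
      have hlu : Real.log u < 0 := Real.log_neg hu0 hu1
      have hlb : Real.log (A ^ M) ≤ 0 := Real.log_nonpos hbn.le hbn1
      have hinvle : ((M : ℝ))⁻¹ ≤ 1 / r n := by
        rw [one_div]
        exact inv_anti₀ hrn hmge
      have hinvnn : (0:ℝ) ≤ ((M : ℝ))⁻¹ := by positivity
      have step1 : |u ^ (1 / r n) - A| ≤
          |Real.log u * (1 / r n) - Real.log (A ^ M) * ((M : ℝ))⁻¹| := by
        rw [hU]
        nth_rewrite 1 [hArep]
        apply my_abs_exp_sub_exp
        · have hpos : 0 < 1 / r n := by positivity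
          nlinarith
        · nlinarith
      have h5 : (n : ℝ) ≤ κ * r n := by
        rw [div_le_iff₀ hrn] at hn1; linarith
      have h4 : (n : ℝ) * (1 / r n - ((M : ℝ))⁻¹) ≤ κ / (M : ℝ) := by
        have e1 : 1 / r n - ((M : ℝ))⁻¹ = ((M : ℝ) - r n) / (r n * (M : ℝ)) := by
          field_simp
        rw [e1, mul_div_assoc']
        rw [div_le_div_iff₀ (by positivity) hmpos]
        have h7 : (n : ℝ) * ((M : ℝ) - r n) ≤ κ * r n := by
          nlinarith [Nat.cast_nonneg (α := ℝ) n]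
        nlinarith
      have h6 : (n : ℝ) * ((M : ℝ))⁻¹ ≤ κ := by
        rw [← div_eq_mul_inv, div_le_iff₀ hmpos]
        nlinarith
      have h3 : |Real.log u * (1 / r n) - Real.log (A ^ M) * ((M : ℝ))⁻¹| ≤
          |Real.log u| * (1 / r n - ((M : ℝ))⁻¹) +
            |Real.log u - Real.log (A ^ M)| * ((M : ℝ))⁻¹ := by
        have decomp : Real.log u * (1 / r n) - Real.log (A ^ M) * ((M : ℝ))⁻¹ =
            Real.log u * (1 / r n - ((M : ℝ))⁻¹) +
              (Real.log u - Real.log (A ^ M)) * ((M : ℝ))⁻¹ := by ring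
        rw [decomp]
        refine (abs_add_le _ _).trans ?_
        rw [abs_mul, abs_mul, abs_of_nonneg (by linarith : (0:ℝ) ≤ 1 / r n - ((M : ℝ))⁻¹),
          abs_of_nonneg hinvnn]
      have key : (n : ℝ) * |Real.log u * (1 / r n) - Real.log (A ^ M) * ((M : ℝ))⁻¹| ≤
          |Real.log u| * κ / (M : ℝ) + κ * |Real.log u - Real.log (A ^ M)| := by
        calc (n : ℝ) * |Real.log u * (1 / r n) - Real.log (A ^ M) * ((M : ℝ))⁻¹|
            ≤ (n : ℝ) * (|Real.log u| * (1 / r n - ((M : ℝ))⁻¹) +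
              |Real.log u - Real.log (A ^ M)| * ((M : ℝ))⁻¹) :=
              mul_le_mul_of_nonneg_left h3 (Nat.cast_nonneg n)
          _ = |Real.log u| * ((n : ℝ) * (1 / r n - ((M : ℝ))⁻¹)) +
              ((n : ℝ) * ((M : ℝ))⁻¹) * |Real.log u - Real.log (A ^ M)| := by ring
          _ ≤ |Real.log u| * (κ / (M : ℝ)) + κ * |Real.log u - Real.log (A ^ M)| :=
              add_le_add (mul_le_mul_of_nonneg_left h4 (abs_nonneg _))
                (mul_le_mul_of_nonneg_right h6 (abs_nonneg _))
          _ = |Real.log u| * κ / (M : ℝ) + κ * |Real.log u - Real.log (A ^ M)| := by ring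
      have hup : u ^ (1 / r n) ∈ Icc (0:ℝ) 1 :=
        ⟨Real.rpow_nonneg hu0.le _, Real.rpow_le_one hu0.le hu1.le (by positivity)⟩
      have lip := (hδ n).2.2.2.2 _ hup _ ha01
      exact lip.trans ((mul_le_mul_of_nonneg_left step1 (Nat.cast_nonneg n)).trans key)
    have hzero : Tendsto (fun n => δ n (u ^ (1 / r n)) -
        δ n (F (cs (Nat.ceil (r n)) * x + ds (Nat.ceil (r n))))) atTop (nhds 0) :=
      squeeze_zero_norm' (by simpa [Real.norm_eq_abs] using hev) hg
    have hfinal := hzero.add L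
    have hfe : (fun n => (δ n (u ^ (1 / r n)) -
        δ n (F (cs (Nat.ceil (r n)) * x + ds (Nat.ceil (r n))))) +
        δ n (F (cs (Nat.ceil (r n)) * x + ds (Nat.ceil (r n))))) =
        fun n => δ n (u ^ (1 / r n)) := by
      funext n; ring
    rw [hfe, zero_add] at hfinal
    exact hfinal
end

section
/- Let ψ be an Archimedean generator, let (η_n) be a sequence of positive reals with η_n → ∞ as n → ∞, assume 1 − ψ(1/·) is regularly varying at ∞ with index −ρ for some ρ ∈ (0,1], and define the rate r_n = 1/(1 − ψ(1/η_n)). Let δ_n : [0,1] → [0,1] be the Archimax diagonal δ_n(u) = ψ(η_n ψ^{−1}(u)) for u ∈ (0,1], δ_n(0) = 0. Then for every u ∈ [0,1], the diagonal power distortion satisfies D_n^r(u) = ψ(η_n ψ^{−1}(u^{1/r_n})) → D(u) := ψ((−log u)^{1/ρ}) as n → ∞ (with D(0) = 0 and D(1) = 1). If moreover F is a continuous distribution function on ℝ with F ∈ MDA(H) for a GEV distribution function H, with normalizing sequences (c*_n), c*_n > 0, and (d*_n), then for every x ∈ ℝ, δ_n(F(c*_{⌈r_n⌉} x + d*_{⌈r_n⌉}))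 → D(H(x)) as n → ∞. (Theorem on the limiting distortion for meta-Archimax sequences.) -/
open Filter Set Topology

section Helpers
variable {ψ : ℝ → ℝ}

variable {ψ : ℝ → ℝ}

lemma psi_nonneg (hψ : IsArchimedeanGenerator ψ) {t : ℝ} (ht : 0 ≤ t) : 0 ≤ ψ t :=
  (hψ.2.2.1 t ht).1

lemma psi_lt_one (hψ : IsArchimedeanGenerator ψ) {t : ℝ} (ht : 0 < t) : ψ t < 1 := by
  have h := hψ.2.2.2.2 0 t le_rfl ht (by rw [hψ.2.1]; norm_num)
  rwa [hψ.2.1] at h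

lemma psi_rev (hψ : IsArchimedeanGenerator ψ) {x y : ℝ} (hx : 0 ≤ x) (hy : 0 ≤ y)
    (h : ψ x < ψ y) : y < x := by
  by_contra hcon
  push_neg at hcon
  rcases eq_or_lt_of_le hcon with rfl | hxy
  · exact lt_irrefl _ h
  · rcases lt_or_eq_of_le (psi_nonneg hψ hx) with hpos | heq
    · exact absurd (hψ.2.2.2.2 x y hx hxy hpos) (not_lt.2 h.le)
    · have hψy : 0 < ψ y := lt_of_le_of_lt (heq.le.trans le_rfl) h
      have hsub : Icc x y ⊆ Ici (0:ℝ) := fun z hz => le_trans hx hz.1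
      have hmem : ψ y / 2 ∈ Icc (ψ x) (ψ y) := by
        constructor
        · rw [← heq]; positivity
        · linarith
      obtain ⟨z, hz, hzval⟩ := intermediate_value_Icc hcon (hψ.1.mono hsub) hmem
      have hzy : z < y := lt_of_le_of_ne hz.2 (by
        intro hzy; rw [hzy] at hzval; linarith)
      have := hψ.2.2.2.2 z y (le_trans hx hz.1) hzy (by rw [hzval]; positivity)
      rw [hzval] at this; linarith

lemma phi_pos (hψ : IsArchimedeanGenerator ψ) {t : ℝ} (ht : 0 < t) : 0 < 1 - ψ (1/t) :=
  sub_pos.2 (psi_lt_one hψ (by positivity))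

lemma phi0 (hψ : IsArchimedeanGenerator ψ) {η : ℕ → ℝ} (hη : ∀ n, 0 < η n)
    (hηtop : Tendsto η atTop atTop) :
    Tendsto (fun n => 1 - ψ (1/η n)) atTop (𝓝 0) := by
  have h1 : Tendsto (fun n => 1/η n) atTop (𝓝[Ici 0] 0) := by
    rw [tendsto_nhdsWithin_iff]
    refine ⟨by simpa [one_div, Function.comp_def] using tendsto_inv_atTop_zero.comp hηtop, ?_⟩
    exact Eventually.of_forall fun n => le_of_lt (one_div_pos.2 (hη n))
  have h2 : Tendsto (fun n => ψ (1/η n)) atTop (𝓝 1) := by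
    have h3 : ContinuousWithinAt ψ (Ici 0) 0 := hψ.1 0 self_mem_Ici
    have h4 := h3.tendsto.comp h1
    rwa [hψ.2.1] at h4
  have := (tendsto_const_nhds (x := (1:ℝ))).sub h2
  simpa using this

lemma phi0' (hψ : IsArchimedeanGenerator ψ) {η : ℕ → ℝ} (hη : ∀ n, 0 < η n)
    (hηtop : Tendsto η atTop atTop) :
    Tendsto (fun n => 1 - ψ (1/η n)) atTop (𝓝[>] 0) :=
  tendsto_nhdsWithin_iff.2 ⟨phi0 hψ hη hηtop, Eventually.of_forall fun n => phi_pos hψ (hη n)⟩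

lemma rtop (hψ : IsArchimedeanGenerator ψ) {η : ℕ → ℝ} (hη : ∀ n, 0 < η n)
    (hηtop : Tendsto η atTop atTop) :
    Tendsto (fun n => 1 / (1 - ψ (1/η n))) atTop atTop := by
  simpa [one_div, Function.comp_def] using tendsto_inv_nhdsGT_zero.comp (phi0' hψ hη hηtop)

lemma rpow_one_div_neg {b ρ : ℝ} (hb : 0 < b) : ((1:ℝ)/b) ^ (-ρ) = b ^ ρ := by
  rw [one_div, Real.inv_rpow hb.le, Real.rpow_neg hb.le, inv_inv]




lemma exp_slope {u : ℝ} (hu : 0 < u) :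
    Tendsto (fun x : ℝ => (1 - Real.exp (Real.log u * x)) / x) (𝓝[>] 0)
      (𝓝 (-Real.log u)) := by
  have h1 : HasDerivAt (fun x : ℝ => Real.log u * x) (Real.log u) 0 := by
    simpa using (hasDerivAt_id (0:ℝ)).const_mul (Real.log u)
  have h2 : HasDerivAt (fun x : ℝ => Real.exp (Real.log u * x)) (Real.log u) 0 := by
    simpa [Function.comp_def] using (Real.hasDerivAt_exp (Real.log u * 0)).comp 0 h1
  have h3 : HasDerivAt (fun x : ℝ => 1 - Real.exp (Real.log u * x)) (-Real.log u) 0 :=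
    h2.const_sub 1
  have h4 := hasDerivAt_iff_tendsto_slope.1 h3
  have h5 : Tendsto (slope (fun x : ℝ => 1 - Real.exp (Real.log u * x)) 0) (𝓝[>] 0)
      (𝓝 (-Real.log u)) :=
    h4.mono_left (nhdsWithin_mono 0 (fun x hx => ne_of_gt hx))
  refine h5.congr' ?_
  filter_upwards [self_mem_nhdsWithin] with x (hx : 0 < x)
  rw [slope_def_field]
  simp [div_eq_div_iff hx.ne' hx.ne']

lemma log_ratio_tendsto :
    Tendsto (fun p : ℝ => (1 - p) / (-Real.log p)) (𝓝[≠] 1) (𝓝 1) := by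
  have h1 : HasDerivAt (fun y : ℝ => -Real.log y) (-1) 1 := by
    have h := (Real.hasDerivAt_log one_ne_zero).neg; rw [inv_one] at h; exact h
  have h2 := hasDerivAt_iff_tendsto_slope.1 h1
  have h3 := (h2.inv₀ (by norm_num : (-1:ℝ) ≠ 0)).neg
  have h4 : Tendsto (fun p : ℝ => -(slope (fun y : ℝ => -Real.log y) 1 p)⁻¹) (𝓝[≠] 1)
      (𝓝 1) := by
    convert h3 using 2
    norm_num
  refine h4.congr' ?_
  filter_upwards [self_mem_nhdsWithin] with p (hp : p ≠ 1)
  rw [slope_def_field]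
  show -((-Real.log p - -Real.log 1) / (p - 1))⁻¹ = (1 - p) / -Real.log p
  rw [Real.log_one, neg_zero, sub_zero, inv_div, ← neg_div, neg_sub]

section Core
variable {ψ ψinv : ℝ → ℝ} {η : ℕ → ℝ} {ρ : ℝ}

lemma core (hψ : IsArchimedeanGenerator ψ)
    (hψinv : ∀ u ∈ Ioc (0:ℝ) 1, 0 ≤ ψinv u ∧ ψ (ψinv u) = u)
    (hη : ∀ n, 0 < η n) (hηtop : Tendsto η atTop atTop)
    (hρpos : 0 < ρ)
    (hRV : ∀ lam : ℝ, 0 < lam →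
      Tendsto (fun t : ℝ => (1 - ψ (1 / (lam * t))) / (1 - ψ (1 / t))) atTop
        (nhds (lam ^ (-ρ))))
    {q : ℕ → ℝ} (hq : ∀ᶠ n in atTop, q n ∈ Ioc (0:ℝ) 1)
    {L : ℝ} (hL : 0 ≤ L)
    (hlim : Tendsto (fun n => (1 - q n) / (1 - ψ (1 / η n))) atTop (nhds L)) :
    Tendsto (fun n => ψ (η n * ψinv (q n))) atTop (nhds (ψ (L ^ (1/ρ)))) := by
  set c := L ^ (1/ρ) with hcdef
  have hc0 : 0 ≤ c := Real.rpow_nonneg hL _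
  have hcρ : c ^ ρ = L := by
    rw [hcdef, ← Real.rpow_mul hL, one_div, inv_mul_cancel₀ hρpos.ne', Real.rpow_one]
  have hs : Tendsto (fun n => η n * ψinv (q n)) atTop (𝓝 c) := by
    refine tendsto_order.2 ⟨?_, ?_⟩
    · intro a ha
      rcases lt_or_ge a 0 with ha0 | ha0
      · filter_upwards [hq] with n hn
        exact lt_of_lt_of_le ha0 (mul_nonneg (hη n).le (hψinv _ hn).1)
      · have hcpos : 0 < c := lt_of_le_of_lt ha0 ha
        set b := (a + c)/2 with hbdef
        have hbpos : 0 < b := by rw [hbdef]; linarith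
        have hbc : b < c := by rw [hbdef]; linarith
        have hab : a < b := by rw [hbdef]; linarith
        have hbL : b ^ ρ < L := by
          rw [← hcρ]; exact Real.rpow_lt_rpow hbpos.le hbc hρpos
        have hR : Tendsto (fun n => (1 - ψ (1 / ((1/b) * η n))) / (1 - ψ (1 / η n)))
            atTop (𝓝 (b ^ ρ)) := by
          have := (hRV (1/b) (by positivity)).comp hηtop
          rwa [rpow_one_div_neg hbpos] at this
        have h1 := hR.eventually_lt_const (show b ^ ρ < (b ^ ρ + L)/2 by linarith)
        have h2 := hlim.eventually_const_lt (show (b ^ ρ + L)/2 < L by linarith)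
        filter_upwards [h1, h2, hq] with n hn1 hn2 hnq
        have hφ : 0 < 1 - ψ (1 / η n) := phi_pos hψ (hη n)
        have hlt : 1 - ψ (1 / ((1/b) * η n)) < 1 - q n :=
          (div_lt_div_iff_of_pos_right hφ).1 (hn1.trans hn2)
        have harg : 1 / ((1/b) * η n) = b / η n := by
          field_simp
        rw [harg] at hlt
        have hqe : ψ (ψinv (q n)) = q n := (hψinv _ hnq).2
        have hlt2 : ψ (ψinv (q n)) < ψ (b / η n) := by rw [hqe]; linarith
        have ht := psi_rev hψ (hψinv _ hnq).1 (div_nonneg hbpos.le (hη n).le) hlt2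
        calc a < b := hab
          _ < η n * ψinv (q n) := by
            rw [div_lt_iff₀ (hη n)] at ht; linarith [ht]
    · intro b hb
      have hbpos : 0 < b := lt_of_le_of_lt hc0 hb
      have hLb : L < b ^ ρ := by
        rw [← hcρ]
        rcases eq_or_lt_of_le hc0 with hc' | hc'
        · rw [← hc', Real.zero_rpow hρpos.ne']; positivity
        · exact Real.rpow_lt_rpow hc0 hb hρpos
      have hR : Tendsto (fun n => (1 - ψ (1 / ((1/b) * η n))) / (1 - ψ (1 / η n)))
          atTop (𝓝 (b ^ ρ)) := by
        have := (hRV (1/b) (by positivity)).comp hηtop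
        rwa [rpow_one_div_neg hbpos] at this
      have h1 := hR.eventually_const_lt (show (b ^ ρ + L)/2 < b ^ ρ by linarith)
      have h2 := hlim.eventually_lt_const (show L < (b ^ ρ + L)/2 by linarith)
      filter_upwards [h1, h2, hq] with n hn1 hn2 hnq
      have hφ : 0 < 1 - ψ (1 / η n) := phi_pos hψ (hη n)
      have hlt : 1 - q n < 1 - ψ (1 / ((1/b) * η n)) :=
        (div_lt_div_iff_of_pos_right hφ).1 (hn2.trans hn1)
      have harg : 1 / ((1/b) * η n) = b / η n := by field_simp
      rw [harg] at hlt
      have hqe : ψ (ψinv (q n)) = q n := (hψinv _ hnq).2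
      have hlt2 : ψ (b / η n) < ψ (ψinv (q n)) := by rw [hqe]; linarith
      have ht := psi_rev hψ (div_nonneg hbpos.le (hη n).le) (hψinv _ hnq).1 hlt2
      rw [lt_div_iff₀ (hη n)] at ht; linarith [ht]
  have hmem : ∀ᶠ n in atTop, η n * ψinv (q n) ∈ Ici (0:ℝ) := by
    filter_upwards [hq] with n hn
    exact mul_nonneg (hη n).le (hψinv _ hn).1
  have hcont : ContinuousWithinAt ψ (Ici 0) c := hψ.1 c hc0
  exact hcont.tendsto.comp (tendsto_nhdsWithin_iff.2 ⟨hs, hmem⟩)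

end Core




lemma coreTop {ψ ψinv : ℝ → ℝ} {η : ℕ → ℝ} {ρ : ℝ} (hψ : IsArchimedeanGenerator ψ)
    (hψinv : ∀ u ∈ Ioc (0:ℝ) 1, 0 ≤ ψinv u ∧ ψ (ψinv u) = u)
    (hη : ∀ n, 0 < η n) (hηtop : Tendsto η atTop atTop)
    (hρpos : 0 < ρ)
    (hRV : ∀ lam : ℝ, 0 < lam →
      Tendsto (fun t : ℝ => (1 - ψ (1 / (lam * t))) / (1 - ψ (1 / t))) atTop
        (nhds (lam ^ (-ρ))))
    {q : ℕ → ℝ} (hq : ∀ n, q n ∈ Icc (0:ℝ) 1)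
    (hlim : Tendsto (fun n => (1 - q n) / (1 - ψ (1 / η n))) atTop atTop) :
    Tendsto (fun n => if q n = 0 then 0 else ψ (η n * ψinv (q n))) atTop (nhds 0) := by
  rw [NormedAddCommGroup.tendsto_nhds_zero]
  intro ε hε
  have hev : ∀ᶠ s : ℝ in atTop, ψ s < ε := hψ.2.2.2.1.eventually_lt_const hε
  obtain ⟨M0, hM0⟩ := eventually_atTop.1 hev
  set M := max M0 1 with hMdef
  have hMpos : (0:ℝ) < M := lt_of_lt_of_le one_pos (le_max_right _ _)
  have hR : Tendsto (fun n => (1 - ψ (1 / ((1/M) * η n))) / (1 - ψ (1 / η n)))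
      atTop (𝓝 (M ^ ρ)) := by
    have := (hRV (1/M) (by positivity)).comp hηtop
    rwa [rpow_one_div_neg hMpos] at this
  have h1 := hR.eventually_lt_const (show M ^ ρ < M ^ ρ + 1 by linarith)
  have h2 := hlim.eventually_gt_atTop (M ^ ρ + 1)
  filter_upwards [h1, h2] with n hn1 hn2
  have hφ : 0 < 1 - ψ (1 / η n) := phi_pos hψ (hη n)
  have hlt : 1 - ψ (1 / ((1/M) * η n)) < 1 - q n :=
    (div_lt_div_iff_of_pos_right hφ).1 (hn1.trans hn2)
  have harg : 1 / ((1/M) * η n) = M / η n := by field_simp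
  rw [harg] at hlt
  by_cases hq0 : q n = 0
  · rw [if_pos hq0]; simpa using hε
  · rw [if_neg hq0]
    have hnq : q n ∈ Ioc (0:ℝ) 1 := ⟨lt_of_le_of_ne (hq n).1 (Ne.symm hq0), (hq n).2⟩
    have hqe : ψ (ψinv (q n)) = q n := (hψinv _ hnq).2
    have hlt2 : ψ (ψinv (q n)) < ψ (M / η n) := by rw [hqe]; linarith
    have ht := psi_rev hψ (hψinv _ hnq).1 (div_nonneg hMpos.le (hη n).le) hlt2
    have hM2 : M ≤ η n * ψinv (q n) := by
      rw [div_lt_iff₀ (hη n)] at ht; linarith [ht]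
    have hnn : 0 ≤ ψ (η n * ψinv (q n)) :=
      psi_nonneg hψ (le_trans hMpos.le hM2)
    rw [Real.norm_eq_abs, abs_of_nonneg hnn]
    exact hM0 _ (le_trans (le_max_left _ _) hM2)

end Helpers

/-- Theorem on the limiting distortion for meta-Archimax sequences. -/
theorem archimax_distortion_limit
    (ψ ψinv : ℝ → ℝ) (η : ℕ → ℝ) (r : ℕ → ℝ) (ρ : ℝ) (δ : ℕ → ℝ → ℝ) (D : ℝ → ℝ)
    (hψ : IsArchimedeanGenerator ψ)
    (hψinv : ∀ u ∈ Ioc (0:ℝ) 1, 0 ≤ ψinv u ∧ ψ (ψinv u) = u)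
    (hη : ∀ n, 0 < η n) (hηtop : Tendsto η atTop atTop)
    (hρ : ρ ∈ Ioc (0:ℝ) 1)
    (hRV : ∀ lam : ℝ, 0 < lam →
      Tendsto (fun t : ℝ => (1 - ψ (1 / (lam * t))) / (1 - ψ (1 / t))) atTop
        (nhds (lam ^ (-ρ))))
    (hr : ∀ n, r n = 1 / (1 - ψ (1 / η n)))
    (hδ : ∀ n, δ n 0 = 0 ∧ ∀ u ∈ Ioc (0:ℝ) 1, δ n u = ψ (η n * ψinv u))
    (hD : ∀ u : ℝ, D u = if u = 0 then 0 else ψ ((-Real.log u) ^ (1 / ρ))) :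
    (∀ u ∈ Icc (0:ℝ) 1,
      Tendsto (fun n => δ n (u ^ (1 / r n))) atTop (nhds (D u))) ∧
    ∀ F H : ℝ → ℝ, ∀ cs ds : ℕ → ℝ,
      IsDistFun F → Continuous F → IsGEV H → (∀ n, 0 < cs n) →
      (∀ x, Tendsto (fun n => F (cs n * x + ds n) ^ n) atTop (nhds (H x))) →
      ∀ x, Tendsto (fun n => δ n (F (cs (Nat.ceil (r n)) * x + ds (Nat.ceil (r n)))))
        atTop (nhds (D (H x))) := by
  have hρpos : 0 < ρ := hρ.1
  constructor
  · intro u hu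
    rcases eq_or_lt_of_le hu.1 with hu0 | hu0
    · -- u = 0
      have hval : ∀ n, δ n (u ^ (1 / r n)) = 0 := by
        intro n
        rw [← hu0, Real.zero_rpow (by
          rw [hr n, one_div_one_div]
          exact (phi_pos hψ (hη n)).ne'), (hδ n).1]
      rw [hD u, if_pos hu0.symm]
      exact tendsto_const_nhds.congr fun n => (hval n).symm
    · rcases eq_or_lt_of_le hu.2 with hu1 | hu1
      · -- u = 1
        have hinv1 : ψinv 1 = 0 := by
          obtain ⟨h1, h2⟩ := hψinv 1 ⟨one_pos, le_rfl⟩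
          by_contra hne
          have := psi_lt_one hψ (lt_of_le_of_ne h1 (Ne.symm hne))
          rw [h2] at this
          exact lt_irrefl _ this
        have hval : ∀ n, δ n (u ^ (1 / r n)) = 1 := by
          intro n
          rw [hu1, Real.one_rpow, (hδ n).2 1 ⟨one_pos, le_rfl⟩, hinv1, mul_zero, hψ.2.1]
        have hDu : D u = 1 := by
          rw [hu1, hD 1, if_neg one_ne_zero, Real.log_one, neg_zero,
            Real.zero_rpow (one_div_ne_zero hρpos.ne'), hψ.2.1]
        rw [hDu]
        exact tendsto_const_nhds.congr fun n => (hval n).symm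
      · -- 0 < u < 1
        have hL0 : (0:ℝ) ≤ -Real.log u := neg_nonneg.2 (Real.log_nonpos hu0.le hu1.le)
        have hq : ∀ n, u ^ (1 / r n) ∈ Ioc (0:ℝ) 1 := fun n =>
          ⟨Real.rpow_pos_of_pos hu0 _, Real.rpow_le_one hu0.le hu1.le (by
            rw [hr n, one_div_one_div]
            exact (phi_pos hψ (hη n)).le)⟩
        have hlim : Tendsto (fun n => (1 - u ^ (1 / r n)) / (1 - ψ (1 / η n))) atTop
            (𝓝 (-Real.log u)) := by
          have h1 := (exp_slope hu0).comp (phi0' hψ hη hηtop)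
          refine h1.congr fun n => ?_
          show (1 - Real.exp (Real.log u * (1 - ψ (1 / η n)))) / (1 - ψ (1 / η n)) = _
          rw [hr n, one_div_one_div, Real.rpow_def_of_pos hu0]
        have hcore := core hψ hψinv hη hηtop hρpos hRV (Eventually.of_forall hq) hL0 hlim
        rw [hD u, if_neg hu0.ne']
        exact hcore.congr fun n => ((hδ n).2 _ (hq n)).symm
  · intro F H cs ds hF hFcont hH hcs hMDA x
    set m : ℕ → ℕ := fun n => Nat.ceil (r n) with hm
    set p : ℕ → ℝ := fun n => F (cs (m n) * x + ds (m n)) with hp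
    have hrpos : ∀ n, 0 < r n := fun n => by
      rw [hr n]; exact one_div_pos.2 (phi_pos hψ (hη n))
    have hrtop : Tendsto r atTop atTop :=
      (rtop hψ hη hηtop).congr fun n => (hr n).symm
    have hmtop : Tendsto m atTop atTop := by
      rw [tendsto_atTop]
      intro b
      filter_upwards [hrtop.eventually_ge_atTop (b:ℝ)] with n hn
      exact Nat.cast_le.1 ((Nat.cast_le.2 (le_refl b)).trans_eq rfl |>.trans
        (hn.trans (Nat.le_ceil (r n))))
    have hm1 : ∀ᶠ n in atTop, 1 ≤ m n := hmtop.eventually_ge_atTop 1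
    have hmR : Tendsto (fun n => (m n : ℝ)) atTop atTop :=
      tendsto_natCast_atTop_atTop.comp hmtop
    have hpow : Tendsto (fun n => p n ^ m n) atTop (𝓝 (H x)) := (hMDA x).comp hmtop
    have hp01 : ∀ n, p n ∈ Icc (0:ℝ) 1 := fun n => hF.2.2.2.2 _
    have hrm1 : ∀ n, (m n : ℝ) < r n + 1 := fun n => Nat.ceil_lt_add_one (hrpos n).le
    have hH0 : 0 ≤ H x :=
      le_of_tendsto_of_tendsto' tendsto_const_nhds hpow fun n => pow_nonneg (hp01 n).1 _
    have hH1 : H x ≤ 1 :=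
      le_of_tendsto_of_tendsto' hpow tendsto_const_nhds fun n =>
        pow_le_one₀ (hp01 n).1 (hp01 n).2
    rcases eq_or_lt_of_le hH0 with hHx0 | hHxpos
    · -- H x = 0
      have htopl : Tendsto (fun n => (1 - p n) / (1 - ψ (1 / η n))) atTop atTop := by
        rw [tendsto_atTop]
        intro K
        set K' := max K 1 with hK'
        have hK'pos : (0:ℝ) < K' := lt_of_lt_of_le one_pos (le_max_right _ _)
        have e1 := hrtop.eventually_ge_atTop (2*K')
        have e2 : ∀ᶠ n in atTop, p n ^ m n < Real.exp (-(4*K')) :=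
          hpow.eventually_lt_const (by rw [← hHx0]; positivity)
        have e3 := hmtop.eventually_ge_atTop 2
        filter_upwards [e1, e2, e3] with n h1 h2 h3
        have hφ := phi_pos hψ (hη n)
        have hrw : (1 - p n) / (1 - ψ (1 / η n)) = (1 - p n) * r n := by
          rw [hr n, ← div_eq_mul_one_div]
        rw [hrw]
        rcases le_or_gt (p n) (1/2) with hple | hpgt
        · have hstep : (1:ℝ)/2 * (2*K') ≤ (1 - p n) * r n :=
            mul_le_mul (by linarith) h1 (by linarith) (by linarith)
          calc K ≤ K' := le_max_left _ _
            _ = 1/2*(2*K') := by ring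
            _ ≤ _ := hstep
        · have hppos' : (0:ℝ) < p n := lt_trans (by norm_num) hpgt
          have hmpos : (0:ℝ) < (m n : ℝ) := by
            have : (2:ℝ) ≤ (m n : ℝ) := by exact_mod_cast h3
            linarith
          have hlogpow : (m n:ℝ) * Real.log (p n) < -(4*K') := by
            have hlt := Real.log_lt_log (pow_pos hppos' (m n)) h2
            rwa [Real.log_pow, Real.log_exp] at hlt
          have hlogbound : 4*K'/(m n:ℝ) < -Real.log (p n) := by
            rw [div_lt_iff₀ hmpos]
            nlinarith [hlogpow]
          have h1p : -Real.log (p n) / 2 ≤ 1 - p n := by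
            have hinv := Real.log_le_sub_one_of_pos (inv_pos.2 hppos')
            rw [Real.log_inv] at hinv
            have hpinv : p n * (p n)⁻¹ = 1 := mul_inv_cancel₀ hppos'.ne'
            nlinarith [(hp01 n).2]
          have hgap : 2*K'/(m n:ℝ) ≤ 1 - p n := by
            have heq2 : 4*K'/(m n:ℝ)/2 = 2*K'/(m n:ℝ) := by ring
            linarith [hlogbound, h1p, heq2]
          have hrlow : (m n:ℝ)/2 ≤ r n := by
            have h2' : (2:ℝ) ≤ (m n : ℝ) := by exact_mod_cast h3
            linarith [hrm1 n]
          have hmul := mul_le_mul hgap hrlow (by positivity)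
            (by linarith [(hp01 n).2])
          have heq : 2*K'/(m n:ℝ) * ((m n:ℝ)/2) = K' := by
            field_simp
          calc K ≤ K' := le_max_left _ _
            _ = 2*K'/(m n:ℝ) * ((m n:ℝ)/2) := heq.symm
            _ ≤ (1 - p n) * r n := hmul
      have hcoreT := coreTop hψ hψinv hη hηtop hρpos hRV hp01 htopl
      rw [← hHx0, hD 0, if_pos rfl]
      refine hcoreT.congr fun n => ?_
      show _ = δ n (p n)
      by_cases h : p n = 0
      · rw [if_pos h, h, (hδ n).1]
      · rw [if_neg h]
        exact ((hδ n).2 _ ⟨lt_of_le_of_ne (hp01 n).1 (Ne.symm h), (hp01 n).2⟩).symm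
    · -- 0 < H x
      have hppos : ∀ᶠ n in atTop, 0 < p n := by
        filter_upwards [Tendsto.eventually_const_lt hHxpos hpow, hm1] with n h1 h2
        by_contra hle
        push_neg at hle
        have hpz : p n = 0 := le_antisymm hle (hp01 n).1
        rw [hpz, zero_pow (by omega : m n ≠ 0)] at h1
        exact lt_irrefl _ h1
      have hlog : Tendsto (fun n => (m n : ℝ) * Real.log (p n)) atTop
          (𝓝 (Real.log (H x))) := by
        have hcont := (Real.continuousAt_log hHxpos.ne').tendsto.comp hpow
        exact hcont.congr fun n => by simp [Function.comp, Real.log_pow]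
      have hq : ∀ᶠ n in atTop, p n ∈ Ioc (0:ℝ) 1 := by
        filter_upwards [hppos] with n hn
        exact ⟨hn, (hp01 n).2⟩
      rcases eq_or_lt_of_le hH1 with hHx1 | hHxlt
      · -- H x = 1
        have hupper : Tendsto (fun n => (m n:ℝ) * (-Real.log (p n))) atTop (𝓝 0) := by
          have h1 := hlog.neg
          rw [hHx1, Real.log_one, neg_zero] at h1
          exact h1.congr fun n => (mul_neg _ _).symm
        have hlim : Tendsto (fun n => (1 - p n) / (1 - ψ (1 / η n))) atTop (𝓝 0) := by
          refine tendsto_of_tendsto_of_tendsto_of_le_of_le' tendsto_const_nhds hupper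
            ?_ ?_
          · filter_upwards with n
            exact div_nonneg (by linarith [(hp01 n).2]) (phi_pos hψ (hη n)).le
          · filter_upwards [hppos] with n hn
            have h1 : 1 - p n ≤ -Real.log (p n) := by
              have := Real.log_le_sub_one_of_pos hn
              linarith
            have hlognn : 0 ≤ -Real.log (p n) :=
              neg_nonneg.2 (Real.log_nonpos hn.le (hp01 n).2)
            calc (1 - p n) / (1 - ψ (1/η n)) = (1 - p n) * r n := by
                  rw [hr n, ← div_eq_mul_one_div]
              _ ≤ (-Real.log (p n)) * r n :=
                  mul_le_mul_of_nonneg_right h1 (hrpos n).le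
              _ ≤ (-Real.log (p n)) * (m n:ℝ) :=
                  mul_le_mul_of_nonneg_left (Nat.le_ceil _) hlognn
              _ = (m n:ℝ) * (-Real.log (p n)) := mul_comm _ _
        have hcore := core hψ hψinv hη hηtop hρpos hRV hq le_rfl hlim
        rw [hHx1, hD 1, if_neg one_ne_zero, Real.log_one, neg_zero]
        refine hcore.congr' ?_
        filter_upwards [hq] with n hn
        exact ((hδ n).2 _ hn).symm
      · -- 0 < H x < 1
        have hplt1 : ∀ᶠ n in atTop, p n < 1 := by
          filter_upwards [hpow.eventually_lt_const
            (show H x < (H x + 1)/2 by linarith), hm1] with n h1 h2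
          by_contra hge
          push_neg at hge
          have hpe : p n = 1 := le_antisymm (hp01 n).2 hge
          rw [hpe, one_pow] at h1
          linarith
        have hlogp : Tendsto (fun n => Real.log (p n)) atTop (𝓝 0) := by
          have h1 := hlog.div_atTop hmR
          refine h1.congr' ?_
          filter_upwards [hm1] with n hn
          have hne : (m n : ℝ) ≠ 0 := (Nat.cast_pos.2 (by omega)).ne'
          rw [mul_comm, mul_div_assoc, div_self hne, mul_one]
        have hp1 : Tendsto p atTop (𝓝 1) := by
          have h1 := (Real.continuous_exp.tendsto 0).comp hlogp
          rw [Real.exp_zero] at h1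
          refine h1.congr' ?_
          filter_upwards [hppos] with n hn
          exact Real.exp_log hn
        have hratio : Tendsto (fun n => (1 - p n) / (-Real.log (p n))) atTop (𝓝 1) := by
          refine log_ratio_tendsto.comp (tendsto_nhdsWithin_iff.2 ⟨hp1, ?_⟩)
          filter_upwards [hplt1] with n hn
          exact hn.ne
        have hprod : Tendsto (fun n => (m n:ℝ) * (1 - p n)) atTop
            (𝓝 (-Real.log (H x))) := by
          have h1 : Tendsto (fun n => (m n:ℝ) * (-Real.log (p n))) atTop
              (𝓝 (-Real.log (H x))) :=
            hlog.neg.congr fun n => (mul_neg _ _).symm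
          have h2 := h1.mul hratio
          rw [mul_one] at h2
          refine h2.congr' ?_
          filter_upwards [hppos, hplt1] with n hn1 hn2
          have hlogne : -Real.log (p n) ≠ 0 := (neg_pos.2 (Real.log_neg hn1 hn2)).ne'
          rw [mul_assoc, mul_comm (-Real.log (p n)), div_mul_cancel₀ _ hlogne]
        have hrm : Tendsto (fun n => r n / (m n:ℝ)) atTop (𝓝 1) := by
          have hlowten : Tendsto (fun n => 1 - ((m n:ℝ))⁻¹) atTop (𝓝 1) := by
            have h1 := hmR.inv_tendsto_atTop
            have h2 := (tendsto_const_nhds (x := (1:ℝ))).sub h1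
            simpa using h2
          refine tendsto_of_tendsto_of_tendsto_of_le_of_le' hlowten tendsto_const_nhds
            ?_ ?_
          · filter_upwards [hm1] with n hn
            have hmpos : (0:ℝ) < (m n:ℝ) := Nat.cast_pos.2 (by omega)
            have h2 : (m n:ℝ) - 1 ≤ r n := by linarith [hrm1 n]
            calc 1 - (m n:ℝ)⁻¹ = ((m n:ℝ) - 1)/(m n:ℝ) := by field_simp
              _ ≤ r n / (m n:ℝ) := by gcongr
          · filter_upwards [hm1] with n hn
            have hmpos : (0:ℝ) < (m n:ℝ) := Nat.cast_pos.2 (by omega)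
            rw [div_le_one hmpos]
            exact Nat.le_ceil _
        have hlim : Tendsto (fun n => (1 - p n) / (1 - ψ (1 / η n))) atTop
            (𝓝 (-Real.log (H x))) := by
          have h1 := hprod.mul hrm
          rw [mul_one] at h1
          refine h1.congr' ?_
          filter_upwards [hm1] with n hn
          have hmne : (m n:ℝ) ≠ 0 := (Nat.cast_pos.2 (by omega)).ne'
          have hφ := phi_pos hψ (hη n)
          rw [hr n]
          field_simp
        have hL0 : (0:ℝ) ≤ -Real.log (H x) :=
          neg_nonneg.2 (Real.log_nonpos hH0 hH1)
        have hcore := core hψ hψinv hη hηtop hρpos hRV hq hL0 hlim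
        rw [hD (H x), if_neg hHxpos.ne']
        refine hcore.congr' ?_
        filter_upwards [hq] with n hn
        exact ((hδ n).2 _ hn).symm
end

section
/- Let ψ be an Archimedean generator that is differentiable on (0,∞) and let ρ ∈ (0,1]. Then the function D : [0,1] → [0,1] defined by D(u) = ψ((−log u)^{1/ρ}) for u ∈ (0,1), D(0) = 0, D(1) = 1, is a continuous distribution function on [0,1]; its quantile function is D^{−1}(u) = exp(−(ψ^{−1}(u))^ρ), i.e., D(exp(−(ψ^{−1}(u))^ρ)) = u for u ∈ (0,1); D is differentiable on (0,1) with density d(u) = D'(u) = −ψ'((−log u)^{1/ρ}) · (−log u)^{(1−ρ)/ρ} / (ρ u) for u ∈ (0,1); and the boundary limits satisfy lim_{u→0⁺} d(u) = lim_{y→∞} −ψ'(y) y^{1−ρ} e^{y^ρ}/ρ, while lim_{u→1⁻} d(u) = −ψ'(0⁺) if ρ = 1 and lim_{u→1⁻} d(u) = lim_{y→0⁺} −ψ'(y) y^{1−ρ}/ρ if ρ ∈ (0,1) (each boundary equality meaning that one limit exists in [0,∞] if and only if the other does, in which case they are equal). -/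
open Filter Set Topology

/-- Corollary: the Archimedean distortion `D(u) = ψ((−log u)^{1/ρ})` is a distribution
function on `[0,1]`, with the stated quantile function, density and boundary limits. -/
theorem archimedean_distortion_density
    (ψ ψinv : ℝ → ℝ) (ρ : ℝ) (D d : ℝ → ℝ)
    (hψ : IsArchimedeanGenerator ψ)
    (hψdiff : DifferentiableOn ℝ ψ (Ioi 0))
    (hψinv : ∀ u ∈ Ioc (0:ℝ) 1, 0 ≤ ψinv u ∧ ψ (ψinv u) = u)
    (hρ : ρ ∈ Ioc (0:ℝ) 1)
    (hD0 : D 0 = 0) (hD1 : D 1 = 1)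
    (hD : ∀ u ∈ Ioo (0:ℝ) 1, D u = ψ ((-Real.log u) ^ (1 / ρ)))
    (hd : ∀ u ∈ Ioo (0:ℝ) 1,
      d u = -(deriv ψ ((-Real.log u) ^ (1 / ρ))) * (-Real.log u) ^ ((1 - ρ) / ρ) / (ρ * u)) :
    (ContinuousOn D (Icc 0 1) ∧ MonotoneOn D (Icc 0 1) ∧
      ∀ u ∈ Icc (0:ℝ) 1, D u ∈ Icc (0:ℝ) 1) ∧
    (∀ u ∈ Ioo (0:ℝ) 1, D (Real.exp (-(ψinv u ^ ρ))) = u) ∧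
    (∀ u ∈ Ioo (0:ℝ) 1, HasDerivAt D (d u) u) ∧
    (∀ L : ENNReal,
      Tendsto (fun u => ENNReal.ofReal (d u)) (nhdsWithin 0 (Ioo 0 1)) (nhds L) ↔
      Tendsto (fun y : ℝ =>
          ENNReal.ofReal (-(deriv ψ y) * y ^ (1 - ρ) * Real.exp (y ^ ρ) / ρ))
        atTop (nhds L)) ∧
    (∀ L : ENNReal,
      Tendsto (fun u => ENNReal.ofReal (d u)) (nhdsWithin 1 (Ioo 0 1)) (nhds L) ↔
      Tendsto (fun y : ℝ => ENNReal.ofReal (-(deriv ψ y) * y ^ (1 - ρ) / ρ))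
        (nhdsWithin 0 (Ioi 0)) (nhds L)) := by
  obtain ⟨hρ0, hρ1⟩ := hρ
  obtain ⟨hcont, hψzero, hmem, hψtop, hstrict⟩ := hψ
  have hρne : ρ ≠ 0 := ne_of_gt hρ0
  have hinvρ : (0:ℝ) < 1 / ρ := by positivity
  set g : ℝ → ℝ := fun u => (-Real.log u) ^ (1 / ρ) with hg_def
  set h : ℝ → ℝ := fun y => Real.exp (-(y ^ ρ)) with hh_def
  -- basic facts for u ∈ Ioo 0 1
  have hlog : ∀ u ∈ Ioo (0:ℝ) 1, 0 < -Real.log u := fun u hu => by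
    simpa using Real.log_neg hu.1 hu.2
  have hgpos : ∀ u ∈ Ioo (0:ℝ) 1, 0 < g u := fun u hu =>
    Real.rpow_pos_of_pos (hlog u hu) _
  have hgρ : ∀ u ∈ Ioo (0:ℝ) 1, (g u) ^ ρ = -Real.log u := fun u hu => by
    rw [hg_def]
    simp only [one_div]
    exact Real.rpow_inv_rpow (le_of_lt (hlog u hu)) hρne
  have hexpg : ∀ u ∈ Ioo (0:ℝ) 1, Real.exp ((g u) ^ ρ) = u⁻¹ := fun u hu => by
    rw [hgρ u hu, Real.exp_neg, Real.exp_log hu.1]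
  have hgh : ∀ y : ℝ, 0 < y → g (h y) = y := fun y hy => by
    rw [hg_def, hh_def]
    simp only [Real.log_exp, neg_neg, one_div]
    exact Real.rpow_rpow_inv hy.le hρne
  have hhmem : ∀ y : ℝ, 0 < y → h y ∈ Ioo (0:ℝ) 1 := fun y hy => by
    constructor
    · exact Real.exp_pos _
    · rw [hh_def]
      simp only
      rw [Real.exp_lt_one_iff, neg_lt_zero]
      exact Real.rpow_pos_of_pos hy _
  -- antitonicity of ψ
  have hanti : ∀ s t : ℝ, 0 ≤ s → s ≤ t → ψ t ≤ ψ s := by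
    intro s t hs hst
    rcases eq_or_lt_of_le hst with rfl | hlt
    · exact le_refl _
    by_contra hc
    push_neg at hc
    have hψt : 0 < ψ t := lt_of_le_of_lt ((hmem s hs).1) hc
    have hψs0 : ψ s = 0 := by
      by_contra h0
      have : 0 < ψ s := lt_of_le_of_ne (hmem s hs).1 (Ne.symm h0)
      exact absurd (hstrict s t hs hlt this) (not_lt.mpr hc.le)
    set A : Set ℝ := Icc s t ∩ ψ ⁻¹' {0} with hA_def
    have hAne : A.Nonempty := ⟨s, ⟨le_refl _, hlt.le⟩, hψs0⟩
    have hAclosed : IsClosed A :=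
      (hcont.mono (Icc_subset_Ici_self.trans (by
        intro x hx; exact le_trans hs hx))).preimage_isClosed_of_isClosed
        isClosed_Icc isClosed_singleton
    have hAcompact : IsCompact A :=
      isCompact_Icc.of_isClosed_subset hAclosed inter_subset_left
    set r := sSup A with hr_def
    have hrA : r ∈ A := hAcompact.sSup_mem hAne
    have hrIcc : r ∈ Icc s t := hrA.1
    have hψr : ψ r = 0 := hrA.2
    have hrt : r < t := lt_of_le_of_ne hrIcc.2 (by
      intro hrt; rw [hrt] at hψr; exact absurd hψr (ne_of_gt hψt))
    have hr0 : 0 ≤ r := le_trans hs hrIcc.1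
    -- points in (r,t) have positive ψ, and ψ t < ψ a there
    have hlt' : ∀ a ∈ Ioo r t, ψ t ≤ ψ a := by
      intro a ha
      have ha0 : 0 ≤ a := le_trans hr0 ha.1.le
      have haψ : 0 < ψ a := by
        rcases lt_or_eq_of_le (hmem a (le_trans hr0 ha.1.le : (0:ℝ) ≤ a)).1 with hpos | heq
        · exact hpos
        · exfalso
          have haA : a ∈ A := ⟨⟨le_trans hrIcc.1 ha.1.le, ha.2.le⟩, heq.symm⟩
          have : a ≤ r := le_csSup hAcompact.bddAbove haA
          exact absurd this (not_le.mpr ha.1)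
      exact (hstrict a t ha0 ha.2 haψ).le
    -- take the limit a → r⁺
    have hne : (𝓝[Ioo r t] r).NeBot := left_nhdsWithin_Ioo_neBot hrt
    have htends : Tendsto ψ (𝓝[Ioo r t] r) (𝓝 0) := by
      rw [← hψr]
      exact ((hcont r (le_trans hs hrIcc.1)).mono
        (fun x hx => le_trans hr0 hx.1.le)).tendsto
    have : ψ t ≤ 0 :=
      ge_of_tendsto htends (eventually_nhdsWithin_of_forall hlt')
    exact absurd this (not_le.mpr hψt)
  -- tendsto facts
  have hgtop : Tendsto g (𝓝[Ioi 0] 0) atTop := by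
    apply (tendsto_rpow_atTop hinvρ).comp
    exact tendsto_neg_atBot_atTop.comp Real.tendsto_log_nhdsGT_zero
  have hgtop' : Tendsto g (𝓝[Ioo (0:ℝ) 1] 0) atTop :=
    hgtop.mono_left (nhdsWithin_mono _ Ioo_subset_Ioi_self)
  have hgcont1 : Tendsto g (𝓝 1) (𝓝 0) := by
    have h2 : Tendsto (fun u : ℝ => -Real.log u) (𝓝 1) (𝓝 0) := by
      have := ((Real.continuousAt_log one_ne_zero).neg).tendsto; simp at this; exact this
    have h1 : Tendsto (fun x : ℝ => x ^ (1/ρ)) (𝓝 0) (𝓝 0) := by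
      have := (Real.continuousAt_rpow_const 0 (1/ρ) (Or.inr hinvρ.le)).tendsto
      simpa [Real.zero_rpow (ne_of_gt hinvρ), Real.zero_rpow (inv_ne_zero hρne)] using this
    exact h1.comp h2
  have hg1 : Tendsto g (𝓝[Ioo (0:ℝ) 1] 1) (𝓝[Ioi 0] 0) := by
    refine tendsto_nhdsWithin_of_tendsto_nhds_of_eventually_within _
      (hgcont1.mono_left nhdsWithin_le_nhds) ?_
    exact eventually_nhdsWithin_of_forall (fun u hu => hgpos u hu)
  have hhtop : Tendsto h atTop (𝓝[Ioo (0:ℝ) 1] 0) := by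
    refine tendsto_nhdsWithin_of_tendsto_nhds_of_eventually_within _ ?_ ?_
    · apply Real.tendsto_exp_atBot.comp
      exact tendsto_neg_atTop_atBot.comp (tendsto_rpow_atTop hρ0)
    · filter_upwards [eventually_gt_atTop (0:ℝ)] with y hy using hhmem y hy
  have hh1 : Tendsto h (𝓝[Ioi 0] 0) (𝓝[Ioo (0:ℝ) 1] 1) := by
    refine tendsto_nhdsWithin_of_tendsto_nhds_of_eventually_within _ ?_ ?_
    · have h1 : ContinuousAt (fun y : ℝ => y ^ ρ) 0 :=
        Real.continuousAt_rpow_const 0 _ (Or.inr hρ0.le)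
      have : Tendsto h (𝓝 0) (𝓝 (Real.exp (-((0:ℝ) ^ ρ)))) :=
        (Real.continuous_exp.continuousAt.comp (h1.neg)).tendsto
      simpa [Real.zero_rpow hρne] using this.mono_left nhdsWithin_le_nhds
    · exact eventually_nhdsWithin_of_forall (fun y hy => hhmem y hy)
  -- D in [0,1]
  have hDmem : ∀ u ∈ Icc (0:ℝ) 1, D u ∈ Icc (0:ℝ) 1 := by
    intro u hu
    rcases eq_or_lt_of_le hu.1 with h0 | h0
    · rw [← h0, hD0]; exact ⟨le_refl _, zero_le_one⟩
    rcases eq_or_lt_of_le hu.2 with h1 | h1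
    · rw [h1, hD1]; exact ⟨zero_le_one, le_refl _⟩
    rw [hD u ⟨h0, h1⟩]
    exact hmem _ (hgpos u ⟨h0, h1⟩).le
  -- monotonicity of D
  have hDmono : MonotoneOn D (Icc 0 1) := by
    intro u hu v hv huv
    rcases eq_or_lt_of_le huv with rfl | huv
    · exact le_refl _
    rcases eq_or_lt_of_le hu.1 with h0 | h0
    · rw [← h0, hD0]; exact (hDmem v hv).1
    rcases eq_or_lt_of_le hv.2 with h1 | h1
    · rw [h1, hD1]; exact (hDmem u hu).2
    have huI : u ∈ Ioo (0:ℝ) 1 := ⟨h0, lt_of_lt_of_le huv hv.2⟩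
    have hvI : v ∈ Ioo (0:ℝ) 1 := ⟨lt_trans h0 huv, h1⟩
    rw [hD u huI, hD v hvI]
    refine hanti _ _ (hgpos v hvI).le ?_
    refine Real.rpow_le_rpow (neg_nonneg.mpr (Real.log_nonpos hvI.1.le hvI.2.le)) ?_ hinvρ.le
    have : Real.log u ≤ Real.log v := Real.log_le_log h0 huv.le
    linarith
  -- continuity of D
  have hDcont : ContinuousOn D (Icc 0 1) := by
    intro u hu
    rcases eq_or_lt_of_le hu.1 with h0 | h0
    · rw [← h0]
      show Tendsto D (𝓝[Icc (0:ℝ) 1] 0) (𝓝 (D 0))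
      rw [hD0, nhdsWithin_Icc_eq_nhdsGE zero_lt_one, ← Ioi_insert,
        nhdsWithin_insert, tendsto_sup]
      constructor
      · simpa [hD0] using tendsto_pure_nhds D 0
      · refine Tendsto.congr' ?_ (hψtop.comp hgtop)
        filter_upwards [Ioo_mem_nhdsGT_of_mem (left_mem_Ico.mpr zero_lt_one)] with v hv
        exact (hD v hv).symm
    rcases eq_or_lt_of_le hu.2 with h1 | h1
    · rw [h1]
      show Tendsto D (𝓝[Icc (0:ℝ) 1] 1) (𝓝 (D 1))
      rw [hD1, nhdsWithin_Icc_eq_nhdsLE zero_lt_one, ← Iio_insert,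
        nhdsWithin_insert, tendsto_sup]
      constructor
      · simpa [hD1] using tendsto_pure_nhds D 1
      · have hg1' : Tendsto g (𝓝[Iio (1:ℝ)] 1) (𝓝[Ici 0] 0) := by
          refine tendsto_nhdsWithin_of_tendsto_nhds_of_eventually_within _
            (hgcont1.mono_left nhdsWithin_le_nhds) ?_
          filter_upwards [Ioo_mem_nhdsLT_of_mem (right_mem_Ioc.mpr zero_lt_one)] with v hv
          exact (hgpos v hv).le
        have hψ1 : Tendsto ψ (𝓝[Ici 0] 0) (𝓝 1) := by
          have := (hcont 0 (self_mem_Ici)).tendsto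
          rwa [hψzero] at this
        refine Tendsto.congr' ?_ (hψ1.comp hg1')
        filter_upwards [Ioo_mem_nhdsLT_of_mem (right_mem_Ioc.mpr zero_lt_one)] with v hv
        exact (hD v hv).symm
    · -- interior point
      have huI : u ∈ Ioo (0:ℝ) 1 := ⟨h0, h1⟩
      have hcg : Tendsto g (𝓝 u) (𝓝 (g u)) := by
        have h2 : Tendsto (fun v : ℝ => -Real.log v) (𝓝 u) (𝓝 (-Real.log u)) :=
          ((Real.continuousAt_log (ne_of_gt h0)).neg).tendsto
        have h1' : Tendsto (fun x : ℝ => x ^ (1/ρ)) (𝓝 (-Real.log u))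
            (𝓝 ((-Real.log u) ^ (1/ρ))) :=
          (Real.continuousAt_rpow_const _ _ (Or.inl (ne_of_gt (hlog u huI)))).tendsto
        exact h1'.comp h2
      have hψc : Tendsto ψ (𝓝 (g u)) (𝓝 (ψ (g u))) :=
        (hcont.continuousAt (Ici_mem_nhds (hgpos u huI))).tendsto
      have hDc : ContinuousAt D u := by
        have hc : ContinuousAt (fun v => ψ (g v)) u := hψc.comp hcg
        refine hc.congr ?_
        filter_upwards [isOpen_Ioo.mem_nhds huI] with v hv
        exact (hD v hv).symm
      exact hDc.continuousWithinAt
  -- part 2 : quantile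
  have part2 : ∀ u ∈ Ioo (0:ℝ) 1, D (Real.exp (-(ψinv u ^ ρ))) = u := by
    intro u hu
    obtain ⟨hinv0, hinvψ⟩ := hψinv u ⟨hu.1, hu.2.le⟩
    have hpos : 0 < ψinv u := by
      rcases eq_or_lt_of_le hinv0 with h | h
      · exfalso
        rw [← h, hψzero] at hinvψ
        exact absurd hinvψ.symm (ne_of_lt hu.2)
      · exact h
    have heq : Real.exp (-(ψinv u ^ ρ)) = h (ψinv u) := rfl
    rw [heq, hD _ (hhmem _ hpos)]
    show ψ (g (h (ψinv u))) = u
    rw [hgh _ hpos, hinvψ]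
  -- part 3 : density
  have part3 : ∀ u ∈ Ioo (0:ℝ) 1, HasDerivAt D (d u) u := by
    intro u hu
    have hlogu := hlog u hu
    have hlogderiv : HasDerivAt (fun v : ℝ => -Real.log v) (-u⁻¹) u :=
      (Real.hasDerivAt_log (ne_of_gt hu.1)).neg
    have hgderiv : HasDerivAt g (-u⁻¹ * (1/ρ) * (-Real.log u) ^ (1/ρ - 1)) u :=
      hlogderiv.rpow_const (Or.inl (ne_of_gt hlogu))
    have hψd : HasDerivAt ψ (deriv ψ (g u)) (g u) :=
      (hψdiff.differentiableAt (Ioi_mem_nhds (hgpos u hu))).hasDerivAt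
    have hcomp : HasDerivAt (fun v => ψ (g v))
        (deriv ψ (g u) * (-u⁻¹ * (1/ρ) * (-Real.log u) ^ (1/ρ - 1))) u :=
      hψd.comp u hgderiv
    have hDloc : D =ᶠ[𝓝 u] fun v => ψ (g v) := by
      filter_upwards [isOpen_Ioo.mem_nhds hu] with v hv
      exact hD v hv
    have hfinal := hcomp.congr_of_eventuallyEq hDloc
    refine hfinal.congr_deriv (Eq.symm ?_)
    rw [hd u hu]
    have hexp : (-Real.log u) ^ ((1-ρ)/ρ) = (-Real.log u) ^ (1/ρ - 1) := by
      congr 1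
      field_simp
    rw [hexp]
    show -(deriv ψ (g u)) * (-Real.log u) ^ (1/ρ - 1) / (ρ * u) = _
    field_simp
  -- exact formula for d in terms of boundary functions
  have hdg : ∀ u ∈ Ioo (0:ℝ) 1,
      d u = -(deriv ψ (g u)) * (g u) ^ (1-ρ) * Real.exp ((g u) ^ ρ) / ρ := by
    intro u hu
    rw [hd u hu, hexpg u hu]
    have hpow : (g u) ^ (1-ρ) = (-Real.log u) ^ ((1-ρ)/ρ) := by
      show ((-Real.log u) ^ (1/ρ)) ^ (1-ρ) = _
      rw [← Real.rpow_mul (hlog u hu).le]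
      congr 1
      ring
    rw [hpow]
    show -(deriv ψ (g u)) * (-Real.log u) ^ ((1-ρ)/ρ) / (ρ * u) = _
    field_simp
  -- part 4
  have part4 : ∀ L : ENNReal,
      Tendsto (fun u => ENNReal.ofReal (d u)) (𝓝[Ioo (0:ℝ) 1] 0) (𝓝 L) ↔
      Tendsto (fun y : ℝ =>
          ENNReal.ofReal (-(deriv ψ y) * y ^ (1 - ρ) * Real.exp (y ^ ρ) / ρ))
        atTop (𝓝 L) := by
    intro L
    constructor
    · intro hL
      refine Tendsto.congr' ?_ (hL.comp hhtop)
      filter_upwards [eventually_gt_atTop (0:ℝ)] with y hy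
      simp only [Function.comp_apply]
      rw [hdg _ (hhmem y hy), hgh y hy]
    · intro hL
      refine Tendsto.congr' ?_ (hL.comp hgtop')
      filter_upwards [self_mem_nhdsWithin] with u hu
      simp only [Function.comp_apply]
      rw [hdg u hu]
  -- multiplicative splitting for part 5
  have hdg2 : ∀ u ∈ Ioo (0:ℝ) 1, ENNReal.ofReal (d u) =
      ENNReal.ofReal (-(deriv ψ (g u)) * (g u) ^ (1-ρ) / ρ) * ENNReal.ofReal u⁻¹ := by
    intro u hu
    rw [← ENNReal.ofReal_mul' (inv_nonneg.mpr hu.1.le)]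
    congr 1
    rw [hdg u hu, hexpg u hu]
    ring
  have part5 : ∀ L : ENNReal,
      Tendsto (fun u => ENNReal.ofReal (d u)) (𝓝[Ioo (0:ℝ) 1] 1) (𝓝 L) ↔
      Tendsto (fun y : ℝ => ENNReal.ofReal (-(deriv ψ y) * y ^ (1 - ρ) / ρ))
        (𝓝[Ioi (0:ℝ)] 0) (𝓝 L) := by
    intro L
    constructor
    · intro hL
      have h1 := hL.comp hh1
      have h2 : Tendsto (fun y => ENNReal.ofReal (h y)) (𝓝[Ioi (0:ℝ)] 0) (𝓝 1) := by
        have hth : Tendsto h (𝓝[Ioi (0:ℝ)] 0) (𝓝 1) := hh1.mono_right nhdsWithin_le_nhds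
        simpa using ENNReal.tendsto_ofReal hth
      have h3 := ENNReal.Tendsto.mul h1 (Or.inr ENNReal.one_ne_top) h2 (Or.inl one_ne_zero)
      rw [mul_one] at h3
      refine Tendsto.congr' ?_ h3
      filter_upwards [self_mem_nhdsWithin] with y hy
      have hym := hhmem y hy
      simp only [Function.comp_apply]
      rw [hdg2 _ hym, hgh y hy, mul_assoc,
        ← ENNReal.ofReal_mul' hym.1.le, inv_mul_cancel₀ (ne_of_gt hym.1)]
      simp
    · intro hL
      have h1 := hL.comp hg1
      have h2 : Tendsto (fun u : ℝ => ENNReal.ofReal u⁻¹) (𝓝[Ioo (0:ℝ) 1] 1) (𝓝 1) := by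
        have hti : Tendsto (fun u : ℝ => u⁻¹) (𝓝[Ioo (0:ℝ) 1] 1) (𝓝 1) := by
          have := (continuousAt_inv₀ (one_ne_zero (α := ℝ))).tendsto
          simpa using this.mono_left nhdsWithin_le_nhds
        simpa using ENNReal.tendsto_ofReal hti
      have h3 := ENNReal.Tendsto.mul h1 (Or.inr ENNReal.one_ne_top) h2 (Or.inl one_ne_zero)
      rw [mul_one] at h3
      refine Tendsto.congr' ?_ h3
      filter_upwards [self_mem_nhdsWithin] with u hu
      simp only [Function.comp_apply]
      exact (hdg2 u hu).symm
  exact ⟨⟨hDcont, hDmono, hDmem⟩, part2, part3, part4, part5⟩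
end
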